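/- arXiv:2012.07907 — 6 statements merged into one kernel-verified Lean document; each statement's English description precedes it below -/
import Mathlib

section
/- A lattice polytope P with only finitely many gaps that is seminormal is normal. -/
open scoped Classical Pointwise

/-- A point of ℝ^n with integer coordinates. -/
def IsIntPt {n : ℕ} (x : Fin n → ℝ) : Prop := ∀ i, ∃ m : ℤ, x i = m

/-- The lattice spanned by the lattice (integer) points of `P`. -/
noncomputable def lat {n : ℕ} (P : Set (Fin n → ℝ)) : AddSubgroup (Fin n → ℝ) :=
  AddSubgroup.closure {y | y ∈ P ∧ IsIntPt y}

/-- `P` is a lattice polytope: the convex hull of finitely many integer points. -/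
def IsLatticePolytope {n : ℕ} (P : Set (Fin n → ℝ)) : Prop :=
  ∃ S : Finset (Fin n → ℝ), (∀ v ∈ S, IsIntPt v) ∧ P = convexHull ℝ (S : Set (Fin n → ℝ))

/-- `x` is a gap of `P` in the dilation `k·P`: a lattice point of `k·P` that is not a sum of
`k` lattice points of `P`. -/
def IsGapAt {n : ℕ} (P : Set (Fin n → ℝ)) (k : ℕ) (x : Fin n → ℝ) : Prop :=
  x ∈ lat P ∧ x ∈ (k : ℝ) • P ∧
    ¬ ∃ f : Fin k → (Fin n → ℝ), (∀ i, f i ∈ P ∧ f i ∈ lat P) ∧ x = ∑ i, f i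

/-- `x` is a gap of `P` (in some dilation). -/
def IsGap {n : ℕ} (P : Set (Fin n → ℝ)) (x : Fin n → ℝ) : Prop := ∃ k, IsGapAt P k x

/-- `P` is normal: for every `k`, every lattice point of `k·P` is a sum of `k` lattice points
of `P`. -/
def IsNormal {n : ℕ} (P : Set (Fin n → ℝ)) : Prop :=
  ∀ (k : ℕ) (x : Fin n → ℝ), x ∈ lat P → x ∈ (k : ℝ) • P →
    ∃ f : Fin k → (Fin n → ℝ), (∀ i, f i ∈ P ∧ f i ∈ lat P) ∧ x = ∑ i, f i

/-- `P` is seminormal: for every lattice point `x`, if `2x` and `3x` are not gaps then neither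
is `x`. -/
def IsSeminormal {n : ℕ} (P : Set (Fin n → ℝ)) : Prop :=
  ∀ x : Fin n → ℝ, x ∈ lat P → ¬ IsGap P ((2 : ℝ) • x) → ¬ IsGap P ((3 : ℝ) • x) →
    ¬ IsGap P x

/-- a lattice polytope with only finitely many gaps (i.e. a very ample lattice
polytope) that is seminormal is normal. -/
theorem seminormal_of_finitely_many_gaps_is_normal {n : ℕ} (P : Set (Fin n → ℝ))
    (hP : IsLatticePolytope P) (hfin : {x | IsGap P x}.Finite) (hsn : IsSeminormal P) :
    IsNormal P := by
  have hzero : ¬ IsGap P (0 : Fin n → ℝ) := by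
    rintro ⟨k, hlat, hmem, hne⟩
    apply hne
    rcases Nat.eq_zero_or_pos k with rfl | hk
    · exact ⟨fun _ => 0, fun i => i.elim0, by simp⟩
    · obtain ⟨p, hp, hpk⟩ := Set.mem_smul_set.mp hmem
      have hk0 : (k : ℝ) ≠ 0 := by positivity
      have hp0 : p = 0 := by
        rcases smul_eq_zero.mp hpk with h | h
        · exact absurd h hk0
        · exact h
      refine ⟨fun _ => 0, fun i => ⟨hp0 ▸ hp, (lat P).zero_mem⟩, by simp⟩
  intro k x hxlat hxmem
  by_contra hne
  have hxgap : IsGap P x := ⟨k, hxlat, hxmem, hne⟩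
  have hGne : {x | IsGap P x}.Nonempty := ⟨x, hxgap⟩
  obtain ⟨y, hy, hymax'⟩ := Set.Finite.exists_maximalFor (fun z => ‖z‖) _ hfin hGne
  have hymax : ∀ z ∈ {x | IsGap P x}, ‖y‖ ≤ ‖z‖ → ‖y‖ = ‖z‖ :=
    fun z hz h => le_antisymm h (hymax' hz h)
  have hy0 : y ≠ 0 := fun h => hzero (h ▸ hy)
  have hylat : y ∈ lat P := hy.choose_spec.1
  have h23 : IsGap P ((2 : ℝ) • y) ∨ IsGap P ((3 : ℝ) • y) := by
    by_contra h
    push_neg at h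
    exact hsn y hylat h.1 h.2 hy
  have hypos : (0 : ℝ) < ‖y‖ := norm_pos_iff.mpr hy0
  rcases h23 with h | h
  · have hle : ‖y‖ ≤ ‖(2 : ℝ) • y‖ := by
      rw [norm_smul]; simp; nlinarith [norm_nonneg y]
    have heq := hymax _ h hle
    rw [norm_smul] at heq
    simp at heq
    nlinarith
  · have hle : ‖y‖ ≤ ‖(3 : ℝ) • y‖ := by
      rw [norm_smul]; simp; nlinarith [norm_nonneg y]
    have heq := hymax _ h hle
    rw [norm_smul] at heq
    simp at heq
    nlinarith
end

section
/- A loopless graph G is properly 4-colorable if and only if the all-twos vector (2,2,…,2) ∈ ℝ^E is a sum of three cut vectors of G. -/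
open scoped Classical Pointwise

/-- A multigraph is given by `ends : E → V × V`.  `cutVec ends A` is the cut vector
`δ_{A|Aᶜ}` of the cut with parts `A` and `Aᶜ`: value `1` on edges separated by the cut,
value `0` on edges within one part. -/
noncomputable def cutVec {V E : Type} (ends : E → V × V) (A : Set V) : E → ℝ :=
  fun e => if ((ends e).1 ∈ A ↔ (ends e).2 ∈ A) then 0 else 1

/-- The cut polytope `Cut□(G)`: the convex hull of all cut vectors. -/
noncomputable def cutPolytope {V E : Type} (ends : E → V × V) : Set (E → ℝ) :=
  convexHull ℝ {x | ∃ A : Set V, x = cutVec ends A}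

/-- a loopless graph is properly 4-colorable iff the all-twos vector is a sum
of three cut vectors. -/
theorem four_colorable_iff_all_twos_sum_of_three_cuts {V E : Type} [Fintype V] [Fintype E]
    (ends : E → V × V) (hloop : ∀ e, (ends e).1 ≠ (ends e).2) :
    (∃ c : V → Fin 4, ∀ e, c (ends e).1 ≠ c (ends e).2) ↔
    (∃ A₁ A₂ A₃ : Set V,
      (fun _ : E => (2 : ℝ)) = cutVec ends A₁ + cutVec ends A₂ + cutVec ends A₃) := by
  constructor
  · rintro ⟨c, hc⟩
    refine ⟨{v | c v = 0 ∨ c v = 1}, {v | c v = 0 ∨ c v = 2}, {v | c v = 0 ∨ c v = 3}, ?_⟩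
    funext e
    have h := hc e
    simp only [cutVec, Pi.add_apply, Set.mem_setOf_eq]
    obtain ⟨a, ha⟩ : ∃ a, a = c (ends e).1 := ⟨_, rfl⟩
    obtain ⟨b, hb⟩ : ∃ b, b = c (ends e).2 := ⟨_, rfl⟩
    simp only [← ha, ← hb] at h ⊢
    fin_cases a <;> fin_cases b <;>
      first
      | exact absurd rfl h
      | (simp only [← ha, ← hb]; norm_num [Fin.ext_iff, show ((3 : Fin 4) : ℕ) = 3 from rfl])
  · rintro ⟨A₁, A₂, A₃, h⟩
    refine ⟨fun v => if v ∈ A₁ then (if v ∈ A₂ then 0 else 1) else (if v ∈ A₂ then 2 else 3),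
      fun e => ?_⟩
    have he := congrFun h e
    simp only [cutVec, Pi.add_apply] at he
    by_cases h1 : ((ends e).1 ∈ A₁ ↔ (ends e).2 ∈ A₁) <;>
      by_cases h2 : ((ends e).1 ∈ A₂ ↔ (ends e).2 ∈ A₂)
    · exfalso
      by_cases h3 : ((ends e).1 ∈ A₃ ↔ (ends e).2 ∈ A₃) <;> simp [h1, h2, h3] at he <;> norm_num at he
    all_goals
      by_cases m1 : (ends e).1 ∈ A₁ <;> by_cases m2 : (ends e).1 ∈ A₂ <;>
      by_cases n1 : (ends e).2 ∈ A₁ <;> by_cases n2 : (ends e).2 ∈ A₂ <;>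
      simp_all <;> omega
end

section
/- If a point p ∈ ℝ^E is a sum of three cut vectors of a graph G, then for every cut A|B, the image φ_{A|B}(p) is also a sum of three cut vectors of G; conversely, since φ_{A|B} is an involution, p is a sum of three cut vectors if and only if φ_{A|B}(p) is. -/
open scoped Classical Pointwise

/-- The switching map of the cut `A|Aᶜ` acting on the `k`-th dilation: `x_e ↦ k - x_e` on
edges separated by the cut, identity on the other coordinates (for `k = 1` this is the usual
switching map `φ_{A|B}`; for points that are sums of `k` cut vectors the appropriate affine
correction replaces `1 - x_e` by `k - x_e`). -/
noncomputable def phiDil {V E : Type} (ends : E → V × V) (A : Set V) (k : ℝ)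
    (x : E → ℝ) : E → ℝ :=
  fun e => if ((ends e).1 ∈ A ↔ (ends e).2 ∈ A) then x e else k - x e

lemma cutVec_symmDiff {V E : Type} (ends : E → V × V) (A C : Set V) (e : E) :
    cutVec ends (symmDiff C A) e =
      if ((ends e).1 ∈ A ↔ (ends e).2 ∈ A) then cutVec ends C e else 1 - cutVec ends C e := by
  have key : ((ends e).1 ∈ symmDiff C A ↔ (ends e).2 ∈ symmDiff C A) ↔
      (((ends e).1 ∈ C ↔ (ends e).2 ∈ C) ↔ ((ends e).1 ∈ A ↔ (ends e).2 ∈ A)) := by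
    simp only [Set.mem_symmDiff]; tauto
  simp only [cutVec, key]
  by_cases hA : ((ends e).1 ∈ A ↔ (ends e).2 ∈ A) <;>
    by_cases hC : ((ends e).1 ∈ C ↔ (ends e).2 ∈ C) <;>
    simp [hA, hC]

lemma phiDil_sum_three {V E : Type} (ends : E → V × V) (A : Set V) (C₁ C₂ C₃ : Set V) :
    phiDil ends A 3 (cutVec ends C₁ + cutVec ends C₂ + cutVec ends C₃) =
      cutVec ends (symmDiff C₁ A) + cutVec ends (symmDiff C₂ A) +
        cutVec ends (symmDiff C₃ A) := by
  funext e
  simp only [Pi.add_apply, cutVec_symmDiff, phiDil]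
  split <;> ring

lemma phiDil_invol {V E : Type} (ends : E → V × V) (A : Set V) (k : ℝ) (x : E → ℝ) :
    phiDil ends A k (phiDil ends A k x) = x := by
  funext e
  simp only [phiDil]
  split <;> ring

/-- `p` is a sum of three cut vectors iff its image under the switching map of
any cut `A|B` (acting on the third dilation) is a sum of three cut vectors; both directions
hold since the switching map is an involution. -/
theorem sum_of_three_cuts_iff_phi {V E : Type} [Fintype V] [Fintype E]
    (ends : E → V × V) (A : Set V) (p : E → ℝ) :
    (∃ C₁ C₂ C₃ : Set V, p = cutVec ends C₁ + cutVec ends C₂ + cutVec ends C₃) ↔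
    (∃ C₁ C₂ C₃ : Set V,
      phiDil ends A 3 p = cutVec ends C₁ + cutVec ends C₂ + cutVec ends C₃) := by
  constructor
  · rintro ⟨C₁, C₂, C₃, rfl⟩
    exact ⟨_, _, _, phiDil_sum_three ends A C₁ C₂ C₃⟩
  · rintro ⟨C₁, C₂, C₃, h⟩
    refine ⟨symmDiff C₁ A, symmDiff C₂ A, symmDiff C₃ A, ?_⟩
    rw [← phiDil_invol ends A 3 p, h, phiDil_sum_three]
end

section
/- Let p be a lattice point of 2·Cut□(G) such that p(e) = 1 for all edges e. Then G is bipartite. -/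
open scoped Classical Pointwise

/-- Coordinatewise reduction modulo 2. -/
noncomputable def modTwoMap {E : Type} : (E → ℝ) →+ (E → AddCircle (2:ℝ)) where
  toFun x := fun e => (x e : AddCircle (2:ℝ))
  map_zero' := by funext e; simp
  map_add' x y := by funext e; push_cast; rfl

/-- The coboundary map sending a vertex labelling to the mod-2 sum over edge ends. -/
noncomputable def cobMap {V E : Type} (ends : E → V × V) :
    (V → ℤ) →+ (E → AddCircle (2:ℝ)) where
  toFun f := fun e => ((f (ends e).1 + f (ends e).2 : ℤ) : ℝ)
  map_zero' := by funext e; simp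
  map_add' f g := by
    funext e
    show (((f + g) (ends e).1 + (f + g) (ends e).2 : ℤ) : ℝ)
        = ((f (ends e).1 + f (ends e).2 : ℤ) : ℝ) + (((g (ends e).1 + g (ends e).2 : ℤ) : ℝ) : AddCircle (2:ℝ))
    have : ((f + g) (ends e).1 + (f + g) (ends e).2 : ℤ)
        = (f (ends e).1 + f (ends e).2) + (g (ends e).1 + g (ends e).2) := by
      simp [Pi.add_apply]; ring
    rw [this]
    push_cast
    rfl

/-- if `p` is a lattice point of `2·Cut□(G)` (a point of the second dilation
lying in the lattice generated by the cut vectors) with `p(e) = 1` for all edges, then `G`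
is bipartite. -/
theorem all_ones_lattice_point_implies_bipartite {V E : Type} [Fintype V] [Fintype E]
    (ends : E → V × V) (p : E → ℝ)
    (hp : p ∈ (2 : ℝ) • cutPolytope ends)
    (hlat : p ∈ AddSubgroup.closure {x : E → ℝ | ∃ A : Set V, x = cutVec ends A})
    (hone : ∀ e, p e = 1) :
    ∃ X Y : Set V, X ∪ Y = Set.univ ∧ X ∩ Y = ∅ ∧
      ∀ e, ((ends e).1 ∈ X ∧ (ends e).2 ∈ Y) ∨ ((ends e).1 ∈ Y ∧ (ends e).2 ∈ X) := by
  -- The image of `p` mod 2 lies in the range of the coboundary map.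
  have key : modTwoMap p ∈ (cobMap ends).range := by
    have hle : AddSubgroup.closure {x : E → ℝ | ∃ A : Set V, x = cutVec ends A}
        ≤ AddSubgroup.comap modTwoMap (cobMap ends).range := by
      refine AddSubgroup.closure_le _ |>.mpr ?_
      rintro x ⟨A, rfl⟩
      refine ⟨fun v => if v ∈ A then 1 else 0, ?_⟩
      funext e
      show (((if (ends e).1 ∈ A then (1:ℤ) else 0) + (if (ends e).2 ∈ A then 1 else 0) : ℤ) : ℝ)
          = ((cutVec ends A e : ℝ) : AddCircle (2:ℝ))
      unfold cutVec
      by_cases h1 : (ends e).1 ∈ A <;> by_cases h2 : (ends e).2 ∈ A <;>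
        simp [h1, h2]
    exact hle hlat
  obtain ⟨g, hg⟩ := key
  have hodd : ∀ e, Odd (g (ends e).1 + g (ends e).2) := by
    intro e
    have h1 : ((g (ends e).1 + g (ends e).2 : ℤ) : ℝ) = ((1:ℝ) : AddCircle (2:ℝ)) := by
      have := congrFun hg e
      simpa [cobMap, modTwoMap, hone e] using this
    have h2 : (((g (ends e).1 + g (ends e).2 : ℤ) - 1 : ℝ) : AddCircle (2:ℝ)) = 0 := by
      rw [AddCircle.coe_sub, h1, sub_self]
    rw [AddCircle.coe_eq_zero_iff] at h2
    obtain ⟨n, hn⟩ := h2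
    have : ((g (ends e).1 + g (ends e).2 : ℤ) : ℝ) = ((2 * n + 1 : ℤ) : ℝ) := by
      push_cast
      push_cast [zsmul_eq_mul] at hn
      linarith
    have h3 : g (ends e).1 + g (ends e).2 = 2 * n + 1 := by exact_mod_cast this
    exact ⟨n, by omega⟩
  refine ⟨{v | Even (g v)}, {v | Odd (g v)}, ?_, ?_, ?_⟩
  · ext v; simp [Int.even_or_odd]
  · ext v
    simp only [Set.mem_inter_iff, Set.mem_setOf_eq, Set.mem_empty_iff_false, iff_false, not_and]
    rintro ⟨a, ha⟩ ⟨b, hb⟩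
    omega
  · intro e
    obtain ⟨n, hn⟩ := hodd e
    rcases Int.even_or_odd (g (ends e).1) with ⟨a, ha⟩ | ⟨a, ha⟩
    · left
      exact ⟨⟨a, ha⟩, ⟨n - a, by omega⟩⟩
    · right
      exact ⟨⟨a, ha⟩, ⟨n - a - 1 + 1, by omega⟩⟩
end

section
/- Assuming the four color theorem (every loopless planar graph is properly 4-colorable), every lattice point p of 3·Cut□(G) for a loopless planar (multi)graph G with p(e) ∈ {1,2} for all edges e and such that the set E₁ = {e : p(e) = 1} is the edge set of a cut A|B, is a sum of three cut vectors of G. -/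
open scoped Classical Pointwise

set_option maxHeartbeats 1000000 in
/-- assume the four color theorem (for an abstract planarity predicate
`Planar` on multigraphs: every loopless planar multigraph is properly 4-colorable).  Let
`G` be a loopless planar multigraph and let `p` be a lattice point of `3·Cut□(G)` with
`p(e) ∈ {1,2}` for every edge and such that `E₁ = {e : p(e) = 1}` is exactly the set of
edges of a cut `A|B`.  Then `p` is a sum of three cut vectors of `G`. -/
theorem lattice_point_one_two_sum_of_three_cuts
    (Planar : ∀ {V' E' : Type}, (E' → V' × V') → Prop)
    (fourCT : ∀ {V' E' : Type} [Fintype V'] [Fintype E'] (ends' : E' → V' × V'),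
      (∀ e, (ends' e).1 ≠ (ends' e).2) → Planar ends' →
      ∃ c : V' → Fin 4, ∀ e, c (ends' e).1 ≠ c (ends' e).2)
    {V E : Type} [Fintype V] [Fintype E] (ends : E → V × V)
    (hloop : ∀ e, (ends e).1 ≠ (ends e).2) (hplanar : Planar ends)
    (p : E → ℝ) (hp : p ∈ (3 : ℝ) • cutPolytope ends)
    (hval : ∀ e, p e = 1 ∨ p e = 2)
    (A : Set V) (hA : ∀ e, p e = 1 ↔ cutVec ends A e = 1) :
    ∃ A₁ A₂ A₃ : Set V, p = cutVec ends A₁ + cutVec ends A₂ + cutVec ends A₃ := by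
  obtain ⟨c, hc⟩ := fourCT ends hloop hplanar
  let S : Fin 4 → Set V := fun i => {v | c v = 0 ∨ c v = i}
  refine ⟨symmDiff (S 1) A, symmDiff (S 2) A, symmDiff (S 3) A, ?_⟩
  funext e
  have hcol := hc e
  have hpe : p e = 1 ∨ p e = 2 := hval e
  have hAe : p e = 1 ↔ cutVec ends A e = 1 := hA e
  simp only [cutVec, Pi.add_apply, Set.mem_symmDiff] at *
  set u := (ends e).1
  set v := (ends e).2
  have hpe' : (p e = 1 ∧ (u ∈ A ↔ v ∈ A) = False) ∨ (p e = 2 ∧ (u ∈ A ↔ v ∈ A) = True) := by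
    rcases hpe with h | h
    · left
      refine ⟨h, ?_⟩
      simp only [h, true_iff] at hAe
      by_cases hm : u ∈ A ↔ v ∈ A
      · simp [hm] at hAe
      · simp [hm]
    · right
      refine ⟨h, ?_⟩
      by_cases hm : u ∈ A ↔ v ∈ A
      · simp [hm]
      · simp only [hm, if_neg hm] at hAe
        rw [h] at hAe
        norm_num at hAe
  clear hp hA hAe hval hpe hc hplanar fourCT
  rcases hpe' with ⟨hval', hcut⟩ | ⟨hval', hcut⟩ <;>
    rw [hval'] <;>
    simp only [eq_iff_iff, iff_false, iff_true] at hcut <;>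
    simp only [S, Set.mem_setOf_eq] <;>
    obtain ⟨cu, hcu⟩ : ∃ x, c u = x := ⟨_, rfl⟩ <;>
    obtain ⟨cv, hcv⟩ : ∃ x, c v = x := ⟨_, rfl⟩ <;>
    simp only [hcu, hcv] at hcol ⊢ <;>
    by_cases hu : u ∈ A <;> by_cases hv : v ∈ A <;>
    simp only [hu, hv] at hcut ⊢ <;>
    fin_cases cu <;> fin_cases cv <;> simp_all <;> norm_num
end

section
/- If E₀ ⊆ E(G) and p is a point in 3·Cut□(G) with p(e) = 0 for all e ∈ E₀, and if the contracted multigraph G/E₀ is loopless, then p (viewed as a vector indexed by E(G) \ E₀, identifying edges under contraction) lies in 3·Cut□(G/E₀), and a decomposition of p as a sum of three cut vectors of G/E₀ lifts to a decomposition of p as a sum of three cut vectors of G. -/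
open scoped Classical Pointwise

/-- let `E₀` be a set of edges of `G` and `p ∈ 3·Cut□(G)` with `p(e) = 0` for
all `e ∈ E₀`.  Let `G/E₀` be the contraction: its vertices are the classes of the
equivalence relation `r` generated by the edges of `E₀`, its edges are the edges outside
`E₀`, with induced endpoints `ends'`.  If `G/E₀` is loopless, then `p` (restricted to the
edges of `G/E₀`) lies in `3·Cut□(G/E₀)`, and every decomposition of this restriction as a
sum of three cut vectors of `G/E₀` lifts to a decomposition of `p` as a sum of three cut
vectors of `G`. -/
theorem contraction_lemma {V E : Type} [Fintype V] [Fintype E]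
    (ends : E → V × V) (E₀ : Set E) (p : E → ℝ)
    (hp : p ∈ (3 : ℝ) • cutPolytope ends)
    (hp0 : ∀ e ∈ E₀, p e = 0)
    (r : V → V → Prop)
    (hr : r = Relation.EqvGen (fun u w => ∃ e ∈ E₀, ends e = (u, w) ∨ ends e = (w, u)))
    (ends' : {e : E // e ∉ E₀} → Quot r × Quot r)
    (hends' : ∀ e, ends' e = (Quot.mk r (ends e.1).1, Quot.mk r (ends e.1).2))
    (hloopless : ∀ e, (ends' e).1 ≠ (ends' e).2) :
    (fun e : {e : E // e ∉ E₀} => p e.1) ∈ (3 : ℝ) • cutPolytope ends' ∧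
    ∀ B₁ B₂ B₃ : Set (Quot r),
      ((fun e : {e : E // e ∉ E₀} => p e.1) =
        cutVec ends' B₁ + cutVec ends' B₂ + cutVec ends' B₃) →
      ∃ A₁ A₂ A₃ : Set V, p = cutVec ends A₁ + cutVec ends A₂ + cutVec ends A₃ := by
  have hequiv : Equivalence r := hr ▸ Relation.EqvGen.is_equivalence _
  have hmk : ∀ u v : V, Quot.mk r u = Quot.mk r v ↔ r u v := by
    intro u v
    rw [Quot.eq, hequiv.eqvGen_iff]
  -- extract the convex decomposition of q = p/3
  rw [Set.mem_smul_set] at hp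
  obtain ⟨q, hq, hpq⟩ := hp
  have hqval : ∀ e, p e = 3 * q e := by intro e; rw [← hpq]; rfl
  have hq0 : ∀ e ∈ E₀, q e = 0 := by
    intro e he
    have := hp0 e he
    rw [hqval e] at this; linarith
  rw [cutPolytope, convexHull_eq] at hq
  obtain ⟨ι, t, w, z, hw0, hw1, hz, hcm⟩ := hq
  have hqsum : q = ∑ i ∈ t, w i • z i := by
    rw [← hcm, Finset.centerMass_eq_of_sum_1 _ _ hw1]
  -- nonnegativity of cut vectors
  have hcutnn : ∀ (A : Set V) (e : E), 0 ≤ cutVec ends A e := by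
    intro A e; unfold cutVec; split <;> norm_num
  have hznn : ∀ i ∈ t, ∀ e, 0 ≤ z i e := by
    intro i hi e
    obtain ⟨A, hA⟩ := hz i hi
    rw [hA]; exact hcutnn A e
  -- each positively-weighted cut doesn't separate E₀-edges
  have hkey : ∀ i ∈ t, w i ≠ 0 → ∀ e ∈ E₀, z i e = 0 := by
    intro i hi hwi e he
    have hsum0 : ∑ j ∈ t, w j * z j e = 0 := by
      have := congrFun hqsum e
      rw [hq0 e he] at this
      simpa using this.symm
    have := (Finset.sum_eq_zero_iff_of_nonneg (fun j hj =>
      mul_nonneg (hw0 j hj) (hznn j hj e))).mp hsum0 i hi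
    rcases mul_eq_zero.mp this with h | h
    · exact absurd h hwi
    · exact h
  -- saturation of such cuts
  have hsat : ∀ (A : Set V), (∀ e ∈ E₀, cutVec ends A e = 0) →
      ∀ u v, r u v → (u ∈ A ↔ v ∈ A) := by
    intro A hA u v huv
    rw [hr] at huv
    induction huv with
    | rel u v h =>
      obtain ⟨e, he, hends⟩ := h
      have := hA e he
      unfold cutVec at this
      split at this
      · rename_i hiff
        rcases hends with h' | h' <;> rw [h'] at hiff <;> simp at hiff
        · exact hiff
        · exact hiff.symm
      · norm_num at this
    | refl => exact Iff.rfl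
    | symm _ _ _ ih => exact ih.symm
    | trans _ _ _ _ _ ih1 ih2 => exact ih1.trans ih2
  -- restriction of a saturated cut vector is a cut vector of the contraction
  have hrestrict : ∀ (A : Set V), (∀ e ∈ E₀, cutVec ends A e = 0) →
      (fun e : {e : E // e ∉ E₀} => cutVec ends A e.1)
        = cutVec ends' (Quot.mk r '' A) := by
    intro A hA
    have hmem : ∀ v : V, Quot.mk r v ∈ Quot.mk r '' A ↔ v ∈ A := by
      intro v
      constructor
      · rintro ⟨u, huA, hu⟩
        exact (hsat A hA u v ((hmk u v).mp hu)).mp huA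
      · intro hv; exact ⟨v, hv, rfl⟩
    funext e
    unfold cutVec
    rw [hends' e]
    simp only [hmem]
  constructor
  · -- part 1
    rw [Set.mem_smul_set]
    refine ⟨fun e => q e.1, ?_, ?_⟩
    · rw [cutPolytope, convexHull_eq]
      set t' := t.filter (fun i => w i ≠ 0) with ht'
      refine ⟨ι, t', w, fun i e => z i e.1, ?_, ?_, ?_, ?_⟩
      · intro i hi; exact hw0 i (Finset.mem_filter.mp hi).1
      · rw [ht', Finset.sum_filter_ne_zero, hw1]
      · intro i hi
        obtain ⟨hit, hwi⟩ := Finset.mem_filter.mp hi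
        obtain ⟨A, hA⟩ := hz i hit
        refine ⟨Quot.mk r '' A, ?_⟩
        have h0 : ∀ e ∈ E₀, cutVec ends A e = 0 := fun e he => hA ▸ hkey i hit hwi e he
        show (fun e : {e : E // e ∉ E₀} => z i e.1) = cutVec ends' (Quot.mk r '' A)
        rw [hA]
        exact hrestrict A h0
      · rw [Finset.centerMass_eq_of_sum_1]
        · funext e
          rw [hqsum]
          simp only [Finset.sum_apply, Pi.smul_apply, smul_eq_mul]
          rw [ht', Finset.sum_filter_of_ne]
          intro i hi h
          intro hw
          apply h
          rw [hw, zero_mul]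
        · rw [ht', Finset.sum_filter_ne_zero, hw1]
    · funext e; rw [hqval e.1]; rfl
  · -- part 2
    intro B₁ B₂ B₃ hB
    refine ⟨{v | Quot.mk r v ∈ B₁}, {v | Quot.mk r v ∈ B₂}, {v | Quot.mk r v ∈ B₃}, ?_⟩
    have hlift : ∀ (B : Set (Quot r)) (e : E) (he : e ∉ E₀),
        cutVec ends {v | Quot.mk r v ∈ B} e = cutVec ends' B ⟨e, he⟩ := by
      intro B e he
      unfold cutVec
      rw [hends' ⟨e, he⟩]
      simp [Set.mem_setOf_eq]
    have hE₀zero : ∀ (B : Set (Quot r)) (e : E), e ∈ E₀ →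
        cutVec ends {v | Quot.mk r v ∈ B} e = 0 := by
      intro B e he
      unfold cutVec
      have : Quot.mk r (ends e).1 = Quot.mk r (ends e).2 := by
        rw [hmk, hr]
        exact Relation.EqvGen.rel _ _ ⟨e, he, Or.inl rfl⟩
      simp [Set.mem_setOf_eq, this]
    funext e
    by_cases he : e ∈ E₀
    · simp only [Pi.add_apply]
      rw [hp0 e he, hE₀zero B₁ e he, hE₀zero B₂ e he, hE₀zero B₃ e he]
      norm_num
    · have := congrFun hB ⟨e, he⟩
      simp only [Pi.add_apply] at this ⊢
      rw [hlift B₁ e he, hlift B₂ e he, hlift B₃ e he]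
      exact this
end
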